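/- arXiv:1510.08782 — 4 statements merged into one kernel-verified Lean document; each statement's English description precedes it below -/
import Mathlib

section
/- Let A be a finite-dimensional algebra over an algebraically closed field F of characteristic 0 and suppose A is PI-equivalent to a direct product B_1 × … × B_l of basic algebras. Then exp(A) = max_{1≤i≤l} exp(B_i), and t(A) = max{ t(B_j) : exp(B_j) = exp(A) }. -/
noncomputable section

namespace PIDim

variable (F : Type) [Field F]

/-- The span `P_n` of the multilinear monomials `x_{σ(1)} ⋯ x_{σ(n)}`. -/
def Pn (n : ℕ) : Submodule F (FreeAlgebra F ℕ) :=
  Submodule.span F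
    {w | ∃ σ : Equiv.Perm (Fin n),
      w = (List.ofFn fun i : Fin n => FreeAlgebra.ι F ((σ i : Fin n) : ℕ)).prod}

/-- The T-ideal (here recorded as an `F`-subspace) of polynomial identities of `W`. -/
def IdSet (W : Type) [Ring W] [Algebra F W] : Submodule F (FreeAlgebra F ℕ) where
  carrier := {f | ∀ φ : FreeAlgebra F ℕ →ₐ[F] W, φ f = 0}
  add_mem' := by
    intro a b ha hb φ
    simp [map_add, ha φ, hb φ]
  zero_mem' := by intro φ; simp
  smul_mem' := by
    intro c f hf φ
    simp [map_smul, hf φ]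

/-- The `n`-th codimension `c_n(W) = dim_F P_n/(P_n ∩ Id(W))`. -/
def codim (W : Type) [Ring W] [Algebra F W] (n : ℕ) : ℕ :=
  Module.finrank F (↥(Pn F n) ⧸ Submodule.comap (Pn F n).subtype (IdSet F W))

/-- Two algebras are PI-equivalent when they satisfy the same polynomial identities. -/
def PIequiv (W₁ : Type) [Ring W₁] [Algebra F W₁] (W₂ : Type) [Ring W₂] [Algebra F W₂] : Prop :=
  IdSet F W₁ = IdSet F W₂

/-- The Jacobson radical of `A`, as an `F`-subspace of `A`. -/
def jacRad (A : Type) [Ring A] [Algebra F A] : Submodule F A :=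
  Submodule.restrictScalars F ((⊥ : Ideal A).jacobson)

/-- The nilpotency degree of the Jacobson radical of `A`:
the least `n` with `J(A) ^ n = 0`. -/
def nildeg (A : Type) [Ring A] [Algebra F A] : ℕ :=
  sInf {n : ℕ | jacRad F A ^ n = ⊥}

/-- `Par(A) = (dim_F A_ss, nildeg J(A) - 1)`; here `dim_F A_ss = dim_F A - dim_F J(A)`. -/
def ParP (A : Type) [Ring A] [Algebra F A] : ℕ × ℕ :=
  (Module.finrank F A - Module.finrank F (jacRad F A), nildeg F A - 1)

/-- A bundled finite-dimensional `F`-algebra. -/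
structure FDAlg where
  carrier : Type
  [ring : Ring carrier]
  [alg : Algebra F carrier]
  [fd : FiniteDimensional F carrier]

attribute [instance] FDAlg.ring FDAlg.alg FDAlg.fd

/-- `A` is basic if it is not PI-equivalent to a finite direct product of
finite-dimensional algebras each of whose parameter is lexicographically smaller. -/
def IsBasic (A : Type) [Ring A] [Algebra F A] : Prop :=
  ¬ ∃ (l : ℕ) (B : Fin l → FDAlg F),
      (∀ i, toLex (ParP F (B i).carrier) < toLex (ParP F A)) ∧
      PIequiv F A (∀ i, (B i).carrier)

/-- `e` is the PI-exponent of `W`: the limit of `c_n(W) ^ (1/n)`. -/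
def HasExponent (W : Type) [Ring W] [Algebra F W] (e : ℝ) : Prop :=
  Filter.Tendsto (fun n : ℕ => (codim F W n : ℝ) ^ ((n : ℝ)⁻¹)) Filter.atTop (nhds e)

/-- `t` is the polynomial part of the codimension sequence of `W` (relative to the
exponential part `e`): `c₁ n^t e^n ≤ c_n(W) ≤ c₂ n^t e^n` for large `n`. -/
def HasPolyPart (W : Type) [Ring W] [Algebra F W] (e t : ℝ) : Prop :=
  ∃ c₁ c₂ : ℝ, 0 < c₁ ∧ 0 < c₂ ∧ ∃ N : ℕ, ∀ n ≥ N,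
    c₁ * (n : ℝ) ^ t * e ^ n ≤ (codim F W n : ℝ) ∧
    (codim F W n : ℝ) ≤ c₂ * (n : ℝ) ^ t * e ^ n

/-- Renaming of variables, as an algebra endomorphism of the free algebra. -/
def rename (g : ℕ → ℕ) : FreeAlgebra F ℕ →ₐ[F] FreeAlgebra F ℕ :=
  FreeAlgebra.lift F fun i => FreeAlgebra.ι F (g i)

/-- `p` alternates in the set `S` of variables: every transposition of two variables
of `S` changes `p` to `-p`. -/
def AlternatesOn (S : Finset ℕ) (p : FreeAlgebra F ℕ) : Prop :=
  ∀ a ∈ S, ∀ b ∈ S, a ≠ b → rename F (Equiv.swap a b : ℕ → ℕ) p = -p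

/-- There exists a multilinear non-identity of `A` alternating in `ν` disjoint sets of
size `r` and in `μ` further disjoint sets of size `r + 1`. -/
def ExAltNonId (A : Type) [Ring A] [Algebra F A] (ν r μ : ℕ) : Prop :=
  ∃ (n : ℕ) (p : FreeAlgebra F ℕ) (T : Fin ν → Finset ℕ) (U : Fin μ → Finset ℕ),
    p ∈ Pn F n ∧ p ∉ IdSet F A ∧
    (∀ j, (T j).card = r) ∧ (∀ j, (U j).card = r + 1) ∧
    (∀ j k, j ≠ k → Disjoint (T j) (T k)) ∧
    (∀ j k, j ≠ k → Disjoint (U j) (U k)) ∧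
    (∀ j k, Disjoint (T j) (U k)) ∧
    (∀ j, AlternatesOn F (T j) p) ∧ (∀ j, AlternatesOn F (U j) p)

/-- `max Δ_ν`. -/
def maxDelta (A : Type) [Ring A] [Algebra F A] (ν : ℕ) : ℕ :=
  sSup {r : ℕ | ExAltNonId F A ν r 0}

/-- The first entry `d` of the Kemer index: the stable value of `max Δ_ν`. -/
def kemerD (A : Type) [Ring A] [Algebra F A] : ℕ :=
  ⨅ ν : ℕ, maxDelta F A ν

/-- `max S_ν^d`. -/
def maxSnu (A : Type) [Ring A] [Algebra F A] (ν : ℕ) : ℕ :=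
  sSup {j : ℕ | ExAltNonId F A ν (kemerD F A) j}

/-- The second entry `s` of the Kemer index: the stable value of `max S_ν^d`. -/
def kemerS (A : Type) [Ring A] [Algebra F A] : ℕ :=
  ⨅ ν : ℕ, maxSnu F A ν

/-- The Kemer index `κ_A = (d, s)`. -/
def kemerIdx (A : Type) [Ring A] [Algebra F A] : ℕ × ℕ :=
  (kemerD F A, kemerS F A)

section Aux

open Filter Real

/-! ### Auxiliary lemmas -/

instance Pn_fd (n : ℕ) : FiniteDimensional F (Pn F n) := by
  apply FiniteDimensional.span_of_finite
  have : {w : FreeAlgebra F ℕ | ∃ σ : Equiv.Perm (Fin n),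
      w = (List.ofFn fun i : Fin n => FreeAlgebra.ι F ((σ i : Fin n) : ℕ)).prod} ⊆
      Set.range (fun σ : Equiv.Perm (Fin n) =>
        (List.ofFn fun i : Fin n => FreeAlgebra.ι F ((σ i : Fin n) : ℕ)).prod) := by
    rintro w ⟨σ, rfl⟩; exact ⟨σ, rfl⟩
  exact (Set.finite_range _).subset this

theorem aux_quot_mono {M : Type} [AddCommGroup M] [Module F M] [FiniteDimensional F M]
    {N₁ N₂ : Submodule F M} (h : N₁ ≤ N₂) :
    Module.finrank F (M ⧸ N₂) ≤ Module.finrank F (M ⧸ N₁) := by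
  have h1 := N₁.finrank_quotient_add_finrank
  have h2 := N₂.finrank_quotient_add_finrank
  have := Submodule.finrank_mono h
  omega

theorem aux_quot_iInf {M : Type} [AddCommGroup M] [Module F M] [FiniteDimensional F M]
    {l : ℕ} (N : Fin l → Submodule F M) :
    Module.finrank F (M ⧸ ⨅ i, N i) ≤ ∑ i, Module.finrank F (M ⧸ N i) := by
  have hk : (⨅ i, N i) ≤ LinearMap.ker (LinearMap.pi fun i => (N i).mkQ) := by
    intro x hx
    simp only [LinearMap.mem_ker, LinearMap.pi_apply]
    ext i
    simpa [Submodule.Quotient.mk_eq_zero] using (Submodule.mem_iInf N).1 hx i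
  have hinj : Function.Injective ((⨅ i, N i).liftQ _ hk) :=
    LinearMap.ker_eq_bot.1 (Submodule.ker_liftQ_eq_bot _ _ _ (le_of_eq ?_))
  · calc Module.finrank F (M ⧸ ⨅ i, N i)
        ≤ Module.finrank F (∀ i, M ⧸ N i) := LinearMap.finrank_le_finrank_of_injective hinj
      _ = ∑ i, Module.finrank F (M ⧸ N i) := Module.finrank_pi_fintype F
  · rw [LinearMap.ker_pi]
    ext x; simp [Submodule.mem_iInf, Submodule.Quotient.mk_eq_zero]

theorem IdSet_pi {l : ℕ} (B : Fin l → Type) [∀ i, Ring (B i)] [∀ i, Algebra F (B i)] :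
    IdSet F (∀ i, B i) = ⨅ i, IdSet F (B i) := by
  ext f
  simp only [Submodule.mem_iInf]
  constructor
  · intro hf i φ
    let ψ : FreeAlgebra F ℕ →ₐ[F] ∀ j, B j :=
      Pi.algHom F _ (fun j => if h : j = i then (h ▸ φ) else
        (FreeAlgebra.lift F (fun _ => (0 : B j))))
    have := congrFun (hf ψ) i
    simpa [ψ, Pi.algHom] using this
  · intro hf φ
    funext i
    exact hf i ((Pi.evalAlgHom F B i).comp φ)

theorem IdSet_eq_top_of_subsingleton (W : Type) [Ring W] [Algebra F W] [Subsingleton W] :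
    IdSet F W = ⊤ := by
  ext f; simp only [Submodule.mem_top, iff_true]
  intro φ; exact Subsingleton.elim _ _

theorem one_le_codim (W : Type) [Ring W] [Algebra F W] [Nontrivial W] (n : ℕ) :
    1 ≤ codim F W n := by
  set p : FreeAlgebra F ℕ :=
    (List.ofFn fun i : Fin n => FreeAlgebra.ι F (((1 : Equiv.Perm (Fin n)) i : Fin n) : ℕ)).prod
    with hp
  have hpPn : p ∈ Pn F n := Submodule.subset_span ⟨1, rfl⟩
  have hpId : p ∉ IdSet F W := by
    intro h
    have := h (FreeAlgebra.lift F (fun _ => (1 : W)))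
    rw [hp, map_list_prod] at this
    simp only [List.map_ofFn, Function.comp_def, FreeAlgebra.lift_ι_apply] at this
    simp at this
  have : Nontrivial (↥(Pn F n) ⧸ Submodule.comap (Pn F n).subtype (IdSet F W)) := by
    refine Submodule.Quotient.nontrivial_iff.2 (lt_top_iff_ne_top.2 ?_).ne
    intro h
    exact hpId (Submodule.mem_comap.1 (h ▸ Submodule.mem_top : (⟨p, hpPn⟩ : Pn F n) ∈ _))
  exact Module.finrank_pos

theorem nontrivial_of_isBasic (W : Type) [Ring W] [Algebra F W] (h : IsBasic F W) :
    Nontrivial W := by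
  by_contra hW
  rw [not_nontrivial_iff_subsingleton] at hW
  apply h
  refine ⟨0, Fin.elim0, fun i => i.elim0, ?_⟩
  haveI : Subsingleton (∀ i : Fin 0, (Fin.elim0 i : FDAlg F).carrier) :=
    ⟨fun a b => funext fun i => i.elim0⟩
  unfold PIequiv
  rw [IdSet_eq_top_of_subsingleton, IdSet_eq_top_of_subsingleton]

theorem aux_tendsto_sup' {ι : Type} {s : Finset ι} (hs : s.Nonempty) (f : ι → ℕ → ℝ) (a : ι → ℝ)
    (hf : ∀ i, Filter.Tendsto (f i) Filter.atTop (nhds (a i))) :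
    Filter.Tendsto (fun n => s.sup' hs (fun i => f i n)) Filter.atTop (nhds (s.sup' hs a)) := by
  induction hs using Finset.Nonempty.cons_induction with
  | singleton i =>
      simp only [Finset.sup'_singleton]
      exact hf i
  | cons i s hi hs ih =>
      simp only [Finset.sup'_cons hs]
      exact (hf i).max ih

theorem aux_le_exp {a b s t : ℝ} (ha : 0 < a) (hb : 0 < b)
    (h : ∀ᶠ n : ℕ in Filter.atTop, a * (n : ℝ) ^ s ≤ b * (n : ℝ) ^ t) : s ≤ t := by
  by_contra hlt
  push_neg at hlt
  have h2 : Filter.Tendsto (fun n : ℕ => (n : ℝ) ^ (s - t)) Filter.atTop Filter.atTop :=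
    (tendsto_rpow_atTop (by linarith)).comp tendsto_natCast_atTop_atTop
  have h3 : ∀ᶠ n : ℕ in Filter.atTop, b / a < (n : ℝ) ^ (s - t) :=
    h2.eventually_gt_atTop _
  have h4 : ∀ᶠ n : ℕ in Filter.atTop, (1 : ℕ) ≤ n := Filter.eventually_ge_atTop 1
  obtain ⟨n, hn1, hab, hgt⟩ := (h4.and (h.and h3)).exists
  have hn : (0 : ℝ) < n := by exact_mod_cast hn1
  have ht : (0 : ℝ) < (n : ℝ) ^ t := Real.rpow_pos_of_pos hn t
  rw [Real.rpow_sub hn, div_lt_div_iff₀ ha ht] at hgt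
  linarith

end Aux

/-- If the finite-dimensional algebra `A` is PI-equivalent to a direct
product `B_1 × ⋯ × B_l` of basic algebras, then `exp(A) = max_i exp(B_i)` and
`t(A) = max { t(B_j) : exp(B_j) = exp(A) }`. -/
theorem statement5 {F : Type} [Field F] [IsAlgClosed F] [CharZero F]
    {A : Type} [Ring A] [Algebra F A] [FiniteDimensional F A]
    {l : ℕ} (hl : 0 < l) (B : Fin l → FDAlg F)
    (hbasic : ∀ i, IsBasic F (B i).carrier)
    (hequiv : PIequiv F A (∀ i, (B i).carrier))
    (eA : ℝ) (heA : HasExponent F A eA)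
    (eB : Fin l → ℝ) (heB : ∀ i, HasExponent F (B i).carrier (eB i))
    (tA : ℝ) (htA : HasPolyPart F A eA tA)
    (tB : Fin l → ℝ) (htB : ∀ i, HasPolyPart F (B i).carrier (eB i) (tB i)) :
    eA = ⨆ i, eB i ∧
    tA = sSup {x : ℝ | ∃ j, eB j = eA ∧ x = tB j} := by
  classical
  haveI : Nonempty (Fin l) := ⟨⟨0, hl⟩⟩
  haveI : ∀ i, Nontrivial (B i).carrier := fun i => nontrivial_of_isBasic F _ (hbasic i)
  have hCA : ∀ n, codim F A n = codim F (∀ i, (B i).carrier) n := by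
    intro n; unfold codim; rw [hequiv]
  have hIdpi := IdSet_pi F (fun i => (B i).carrier)
  -- monotonicity bounds
  have hle : ∀ i n, codim F (B i).carrier n ≤ codim F A n := by
    intro i n
    rw [hCA n]
    unfold codim
    apply aux_quot_mono F
    apply Submodule.comap_mono
    rw [hIdpi]
    exact iInf_le _ i
  have hsumN : ∀ n, codim F A n ≤ ∑ i, codim F (B i).carrier n := by
    intro n
    rw [hCA n]
    unfold codim
    rw [hIdpi, Submodule.comap_iInf]
    exact aux_quot_iInf F _
  have hsum : ∀ n, (codim F A n : ℝ) ≤ ∑ i, (codim F (B i).carrier n : ℝ) := by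
    intro n
    exact_mod_cast hsumN n
  -- the sup of the exponents
  set M : ℝ := Finset.univ.sup' Finset.univ_nonempty eB with hM
  set g : ℕ → ℝ := fun n =>
    Finset.univ.sup' Finset.univ_nonempty
      (fun i => (codim F (B i).carrier n : ℝ) ^ ((n : ℝ)⁻¹)) with hg
  have hgM : Filter.Tendsto g Filter.atTop (nhds M) :=
    aux_tendsto_sup' _ _ _ heB
  have hlow : ∀ n, g n ≤ (codim F A n : ℝ) ^ ((n : ℝ)⁻¹) := by
    intro n
    apply Finset.sup'_le
    intro i _
    exact Real.rpow_le_rpow (by positivity) (by exact_mod_cast hle i n) (by positivity)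
  have hup : ∀ᶠ n : ℕ in Filter.atTop,
      (codim F A n : ℝ) ^ ((n : ℝ)⁻¹) ≤ (l : ℝ) ^ ((n : ℝ)⁻¹) * g n := by
    filter_upwards [Filter.eventually_ge_atTop 1] with n hn
    obtain ⟨j, hj, hjmax⟩ := Finset.exists_mem_eq_sup' Finset.univ_nonempty
      (fun i => codim F (B i).carrier n)
    have h1 : codim F A n ≤ l * codim F (B j).carrier n := by
      calc codim F A n ≤ ∑ i, codim F (B i).carrier n := hsumN n
        _ ≤ Finset.univ.card • codim F (B j).carrier n :=
            Finset.sum_le_card_nsmul _ _ _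
              (fun i _ => hjmax ▸ Finset.le_sup' (fun i => codim F (B i).carrier n)
                (Finset.mem_univ i))
        _ = l * codim F (B j).carrier n := by
            simp [Finset.card_univ, smul_eq_mul]
    have h2 : (codim F A n : ℝ) ≤ (l : ℝ) * (codim F (B j).carrier n : ℝ) := by
      exact_mod_cast h1
    have h3 : (codim F A n : ℝ) ^ ((n : ℝ)⁻¹) ≤
        ((l : ℝ) * (codim F (B j).carrier n : ℝ)) ^ ((n : ℝ)⁻¹) :=
      Real.rpow_le_rpow (by positivity) h2 (by positivity)
    rw [Real.mul_rpow (by positivity) (by positivity)] at h3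
    refine h3.trans ?_
    have h4 : (codim F (B j).carrier n : ℝ) ^ ((n : ℝ)⁻¹) ≤ g n :=
      Finset.le_sup' (fun i => (codim F (B i).carrier n : ℝ) ^ ((n : ℝ)⁻¹))
        (Finset.mem_univ j)
    exact mul_le_mul_of_nonneg_left h4 (by positivity)
  have hlpos : (0 : ℝ) < l := by exact_mod_cast hl
  have hl1 : Filter.Tendsto (fun n : ℕ => (l : ℝ) ^ ((n : ℝ)⁻¹)) Filter.atTop (nhds 1) := by
    have h0 : Filter.Tendsto (fun n : ℕ => Real.log l * (n : ℝ)⁻¹) Filter.atTop (nhds 0) := by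
      simpa using
        (tendsto_const_nhds (x := Real.log l)).mul
          (tendsto_inv_atTop_zero.comp tendsto_natCast_atTop_atTop)
    have h1 := (Real.continuous_exp.tendsto 0).comp h0
    simp only [Real.exp_zero] at h1
    refine h1.congr (fun n => ?_)
    rw [Function.comp_apply, ← Real.rpow_def_of_pos hlpos]
  have hupl : Filter.Tendsto (fun n : ℕ => (l : ℝ) ^ ((n : ℝ)⁻¹) * g n)
      Filter.atTop (nhds M) := by
    simpa using hl1.mul hgM
  have hAtend : Filter.Tendsto (fun n : ℕ => (codim F A n : ℝ) ^ ((n : ℝ)⁻¹))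
      Filter.atTop (nhds M) :=
    tendsto_of_tendsto_of_tendsto_of_le_of_le' hgM hupl
      (Filter.Eventually.of_forall hlow) hup
  have heAM : eA = M := tendsto_nhds_unique heA hAtend
  -- exponents at least one
  have heB1 : ∀ i, 1 ≤ eB i := by
    intro i
    apply ge_of_tendsto (heB i)
    filter_upwards [Filter.eventually_ge_atTop 1] with n hn
    have h1 : (1 : ℝ) ≤ (codim F (B i).carrier n : ℝ) := by
      exact_mod_cast one_le_codim F _ n
    calc (1 : ℝ) = 1 ^ ((n : ℝ)⁻¹) := (Real.one_rpow _).symm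
      _ ≤ _ := Real.rpow_le_rpow zero_le_one h1 (by positivity)
  have heA1 : 1 ≤ eA := by
    rw [heAM, hM]
    exact (heB1 (Classical.arbitrary _)).trans (Finset.le_sup' eB (Finset.mem_univ _))
  have heApos : (0 : ℝ) < eA := lt_of_lt_of_le one_pos heA1
  -- the set of indices achieving the max
  set J : Finset (Fin l) := Finset.univ.filter (fun j => eB j = eA) with hJ
  have hJne : J.Nonempty := by
    obtain ⟨j, _, hjeq⟩ := Finset.exists_mem_eq_sup' Finset.univ_nonempty eB
    exact ⟨j, Finset.mem_filter.2 ⟨Finset.mem_univ j, (heAM.trans (hM.trans hjeq)).symm⟩⟩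
  set T : ℝ := J.sup' hJne tB with hT
  have hSet : {x : ℝ | ∃ j, eB j = eA ∧ x = tB j} = ↑(J.image tB) := by
    ext x
    simp only [Set.mem_setOf_eq, Finset.coe_image, Set.mem_image, Finset.mem_coe, hJ,
      Finset.mem_filter, Finset.mem_univ, true_and]
    constructor
    · rintro ⟨j, hj, rfl⟩; exact ⟨j, hj, rfl⟩
    · rintro ⟨j, hj, rfl⟩; exact ⟨j, hj, rfl⟩
  have hsSup : sSup {x : ℝ | ∃ j, eB j = eA ∧ x = tB j} = T := by
    rw [hSet, Finset.coe_image, hT, Finset.sup'_eq_csSup_image]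
  -- T ≤ tA
  have hTtA : T ≤ tA := by
    rw [hT]
    apply Finset.sup'_le
    intro j hj
    have hje : eB j = eA := (Finset.mem_filter.1 hj).2
    obtain ⟨c₁, c₂, hc₁, hc₂, N, hN⟩ := htB j
    obtain ⟨d₁, d₂, hd₁, hd₂, N', hN'⟩ := htA
    apply aux_le_exp hc₁ hd₂
    filter_upwards [Filter.eventually_ge_atTop N, Filter.eventually_ge_atTop N'] with n hn hn'
    have h1 := (hN n hn).1
    have h2 := (hN' n hn').2
    have h3 : (codim F (B j).carrier n : ℝ) ≤ (codim F A n : ℝ) := by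
      exact_mod_cast hle j n
    rw [hje] at h1
    have hepos : (0 : ℝ) < eA ^ n := pow_pos heApos n
    exact le_of_mul_le_mul_right ((h1.trans h3).trans h2) hepos
  -- tA ≤ T
  have htAT : tA ≤ T := by
    obtain ⟨d₁, d₂, hd₁, hd₂, N', hN'⟩ := htA
    choose c₁ c₂ hc₁ hc₂ N hN using htB
    have hTles : ∀ j ∈ J, tB j ≤ T := fun j hj => Finset.le_sup' tB hj
    have key : ∀ i : Fin l, ∀ᶠ n : ℕ in Filter.atTop,
        (codim F (B i).carrier n : ℝ) ≤ (c₂ i + 1) * (n : ℝ) ^ T * eA ^ n := by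
      intro i
      by_cases hiJ : eB i = eA
      · have hiT : tB i ≤ T := hTles i (Finset.mem_filter.2 ⟨Finset.mem_univ i, hiJ⟩)
        filter_upwards [Filter.eventually_ge_atTop (N i),
          Filter.eventually_ge_atTop 1] with n hn hn1
        have h1 := (hN i n hn).2
        rw [hiJ] at h1
        refine h1.trans ?_
        have hnn : (1 : ℝ) ≤ (n : ℝ) := by exact_mod_cast hn1
        have hpow : (n : ℝ) ^ tB i ≤ (n : ℝ) ^ T :=
          Real.rpow_le_rpow_of_exponent_le hnn hiT
        have h5 : (0 : ℝ) ≤ eA ^ n := le_of_lt (pow_pos heApos n)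
        have h6 : (0 : ℝ) ≤ (n : ℝ) ^ T := Real.rpow_nonneg (by positivity) _
        have e1 : c₂ i * (n : ℝ) ^ tB i ≤ c₂ i * (n : ℝ) ^ T :=
          mul_le_mul_of_nonneg_left hpow (le_of_lt (hc₂ i))
        have e2 : c₂ i * (n : ℝ) ^ T ≤ (c₂ i + 1) * (n : ℝ) ^ T :=
          mul_le_mul_of_nonneg_right (by linarith [hc₂ i]) h6
        exact mul_le_mul_of_nonneg_right (e1.trans e2) h5
      · -- eB i < eA
        have hiBle : eB i ≤ M := Finset.le_sup' eB (Finset.mem_univ i)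
        have hiBlt : eB i < eA := lt_of_le_of_ne (heAM ▸ hiBle) hiJ
        have hrpos : (0 : ℝ) < eB i := lt_of_lt_of_le one_pos (heB1 i)
        set b : ℝ := Real.log (eA / eB i) with hb
        have hbpos : 0 < b := Real.log_pos ((one_lt_div hrpos).2 hiBlt)
        have hdecay : Filter.Tendsto
            (fun n : ℕ => (n : ℝ) ^ (tB i - T) * Real.exp (-b * n))
            Filter.atTop (nhds 0) :=
          (tendsto_rpow_mul_exp_neg_mul_atTop_nhds_zero (tB i - T) b hbpos).comp
            tendsto_natCast_atTop_atTop
        have hsmall : ∀ᶠ n : ℕ in Filter.atTop,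
            (n : ℝ) ^ (tB i - T) * Real.exp (-b * n) < (c₂ i)⁻¹ :=
          hdecay.eventually_lt_const (inv_pos.2 (hc₂ i))
        filter_upwards [Filter.eventually_ge_atTop (N i),
          Filter.eventually_ge_atTop 1, hsmall] with n hn hn1 hsm
        have h1 := (hN i n hn).2
        refine h1.trans ?_
        have hnpos : (0 : ℝ) < (n : ℝ) := by
          exact_mod_cast Nat.lt_of_lt_of_le Nat.zero_lt_one hn1
        -- rewrite (eB i)^n = exp(-b*n) * eA^n
        have hexp : (eB i) ^ n = Real.exp (-b * n) * eA ^ n := by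
          have h7 : Real.exp (-b * n) = (eB i / eA) ^ n := by
            have hq : (0 : ℝ) < eB i / eA := div_pos hrpos heApos
            have hlog : -b = Real.log (eB i / eA) := by
              rw [hb, ← Real.log_inv, inv_div]
            rw [hlog, mul_comm, Real.exp_nat_mul, Real.exp_log hq]
          rw [h7, div_pow, div_mul_cancel₀]
          exact pow_ne_zero n (ne_of_gt heApos)
        have hsplit : (n : ℝ) ^ tB i = (n : ℝ) ^ (tB i - T) * (n : ℝ) ^ T := by
          rw [← Real.rpow_add hnpos]; ring_nf
        have h8 : c₂ i * ((n : ℝ) ^ (tB i - T) * Real.exp (-b * n)) ≤ 1 := by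
          have := mul_le_mul_of_nonneg_left (le_of_lt hsm) (le_of_lt (hc₂ i))
          rwa [mul_inv_cancel₀ (ne_of_gt (hc₂ i))] at this
        have h9 : (0 : ℝ) < (n : ℝ) ^ T * eA ^ n := by
          have := Real.rpow_pos_of_pos hnpos T
          have := pow_pos heApos n
          positivity
        calc c₂ i * (n : ℝ) ^ tB i * eB i ^ n
            = (c₂ i * ((n : ℝ) ^ (tB i - T) * Real.exp (-b * n))) * ((n : ℝ) ^ T * eA ^ n) := by
              rw [hexp, hsplit]; ring
          _ ≤ 1 * ((n : ℝ) ^ T * eA ^ n) := by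
              exact mul_le_mul_of_nonneg_right h8 (le_of_lt h9)
          _ ≤ (c₂ i + 1) * (n : ℝ) ^ T * eA ^ n := by
              have h10 : (1 : ℝ) ≤ c₂ i + 1 := by linarith [hc₂ i]
              nlinarith [h9]
    have hallev := Filter.eventually_all.2 key
    have hKpos : (0 : ℝ) < ∑ i, (c₂ i + 1) :=
      Finset.sum_pos (fun i _ => by linarith [hc₂ i]) Finset.univ_nonempty
    apply aux_le_exp hd₁ hKpos
    filter_upwards [hallev, Filter.eventually_ge_atTop N'] with n hn hn'
    have h1 := (hN' n hn').1
    have h2 : (codim F A n : ℝ) ≤ (∑ i, (c₂ i + 1)) * (n : ℝ) ^ T * eA ^ n := by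
      calc (codim F A n : ℝ) ≤ ∑ i, (codim F (B i).carrier n : ℝ) := hsum n
        _ ≤ ∑ i, (c₂ i + 1) * (n : ℝ) ^ T * eA ^ n :=
            Finset.sum_le_sum (fun i _ => hn i)
        _ = (∑ i, (c₂ i + 1)) * (n : ℝ) ^ T * eA ^ n := by
            rw [← Finset.sum_mul, ← Finset.sum_mul]
    exact le_of_mul_le_mul_right (h1.trans h2) (pow_pos heApos n)
  constructor
  · rw [heAM, hM]
    exact Finset.sup'_univ_eq_ciSup eB
  · rw [hsSup]
    exact le_antisymm htAT hTtA


end PIDim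
end
end

section
/- Let V and W be finite-dimensional vector spaces over a field F with W ≠ 0, let U be a linear subspace of Hom_F(V, W), fix a basis w_1, …, w_m of W, and let ψ_1, …, ψ_m ∈ W* be the dual basis. Then there exists an index i such that dim_F (ψ_i ∘ U) ≥ dim_F U / dim_F W, where ψ_i ∘ U = {ψ_i ∘ T : T ∈ U} ⊆ V*. -/
noncomputable section

/-- Let `V`, `W` be finite-dimensional vector spaces with `W ≠ 0`, let
`U ⊆ Hom_F(V, W)` be a subspace, and fix a basis `w_1, …, w_m` of `W` with dual basis
`ψ_1, …, ψ_m`. Then some `ψ_i` satisfies `dim (ψ_i ∘ U) ≥ dim U / dim W`. -/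
theorem statement11 {F V W : Type} [Field F]
    [AddCommGroup V] [Module F V] [AddCommGroup W] [Module F W]
    [FiniteDimensional F V] [FiniteDimensional F W] [Nontrivial W]
    {m : ℕ} (w : Module.Basis (Fin m) F W) (U : Submodule F (V →ₗ[F] W)) :
    ∃ i : Fin m,
      (Module.finrank F ↥U : ℝ) / (Module.finrank F W : ℝ) ≤
        (Module.finrank F
          ↥(U.map ((LinearMap.llcomp F V W F) (w.dualBasis i))) : ℝ) := by
  set d : Fin m → ℕ := fun i =>
    Module.finrank F ↥(U.map ((LinearMap.llcomp F V W F) (w.dualBasis i)))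
  -- injective map from U into the product of images
  let f : ↥U →ₗ[F] (∀ i : Fin m, ↥(U.map ((LinearMap.llcomp F V W F) (w.dualBasis i)))) :=
    { toFun := fun u i => ⟨(LinearMap.llcomp F V W F) (w.dualBasis i) u.1,
        Submodule.mem_map_of_mem u.2⟩
      map_add' := by intro a b; ext i v; simp
      map_smul' := by intro c a; ext i v; simp }
  have hf : Function.Injective f := by
    rw [injective_iff_map_eq_zero]
    intro u hu
    ext v
    have h : ∀ i, w.dualBasis i (u.1 v) = 0 := by
      intro i
      have h1 : f u i = 0 := by rw [hu]; rfl
      have h2 : ((f u i : ↥(U.map ((LinearMap.llcomp F V W F) (w.dualBasis i)))) : V →ₗ[F] F) = 0 :=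
        Submodule.coe_eq_zero.mpr h1
      have := congrFun (congrArg DFunLike.coe h2) v
      simpa [f] using this
    have : u.1 v = 0 := by
      apply w.repr.injective
      ext i
      simpa [Module.Basis.dualBasis_apply] using h i
    simpa using this
  have hsum : Module.finrank F ↥U ≤ ∑ i : Fin m, d i := by
    have := LinearMap.finrank_le_finrank_of_injective hf
    haveI hfree : ∀ i : Fin m, Module.Free F ↥(U.map ((LinearMap.llcomp F V W F) (w.dualBasis i))) :=
      fun i => @Module.Free.of_divisionRing F ↥(U.map ((LinearMap.llcomp F V W F) (w.dualBasis i)))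
        _ (Submodule.addCommGroup _) _
    rwa [Module.finrank_pi_fintype] at this
  have hm : Module.finrank F W = m := by
    rw [Module.finrank_eq_card_basis w, Fintype.card_fin]
  haveI : Nonempty (Fin m) := by
    refine Fin.pos_iff_nonempty.mp ?_
    rcases Nat.eq_zero_or_pos m with h | h
    · exfalso
      rw [h] at hm
      exact (Module.finrank_pos (R := F) (M := W)).ne' hm
    · exact h
  by_contra hcon
  push_neg at hcon
  have hmpos : 0 < m := by
    rcases Nat.eq_zero_or_pos m with h | h
    · exfalso
      have := hm
      rw [h] at this
      exact (Module.finrank_pos (R := F) (M := W)).ne' this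
    · exact h
  have hlt : (Module.finrank F ↥U : ℝ) < Module.finrank F ↥U := by
    calc (Module.finrank F ↥U : ℝ) ≤ ∑ i : Fin m, (d i : ℝ) := by
          exact_mod_cast hsum
      _ < ∑ i : Fin m, (Module.finrank F ↥U : ℝ) / m := by
          apply Finset.sum_lt_sum_of_nonempty
          · exact Finset.univ_nonempty
          · intro i _
            simpa [hm] using hcon i
      _ = Module.finrank F ↥U := by
          rw [Finset.sum_const, Finset.card_univ, Fintype.card_fin, nsmul_eq_mul]
          field_simp [show (m : ℝ) ≠ 0 from by exact_mod_cast hmpos.ne']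
  exact lt_irrefl _ hlt
end
end

section
/- (Regev–Beckner) Let r_1, …, r_q ∈ ℝ and k_1, …, k_q ∈ ℝ with k_i > 0 for all i, and set k = k_1 + ⋯ + k_q and r = r_1 + ⋯ + r_q. Then, as n → ∞, Σ_{n_1+⋯+n_q=n} (n choose n_1,…,n_q) k_1^{n_1} ⋯ k_q^{n_q} n_1^{r_1} ⋯ n_q^{r_q} ∼ ((k_1/k)^{r_1} ⋯ (k_q/k)^{r_q}) · n^r k^n, i.e. the ratio of the two sides tends to 1. -/
noncomputable section

open Finset Real Filter


lemma multinomial_sum_pow {q : ℕ} (w : Fin q → ℝ) (n : ℕ) :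
    ∑ c ∈ Finset.Nat.antidiagonalTuple q n,
      (Nat.multinomial Finset.univ c : ℝ) * ∏ i, w i ^ c i = (∑ i, w i) ^ n := by
  have h : Finset.Nat.antidiagonalTuple q n = Finset.piAntidiag Finset.univ n := by
    ext c; simp [Finset.Nat.mem_antidiagonalTuple, Finset.mem_piAntidiag]
  rw [h, Finset.sum_pow_eq_sum_piAntidiag]

lemma chernoff_master {q : ℕ} (p : Fin q → ℝ) (hp : ∀ j, 0 ≤ p j)
    (hs : ∑ j, p j = 1) (i : Fin q) (u θ : ℝ) (n : ℕ)
    (P : (Fin q → ℕ) → Prop) [DecidablePred P]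
    (hP : ∀ c, P c → θ * n ≤ u * c i) :
    ∑ c ∈ (Finset.Nat.antidiagonalTuple q n).filter P,
        (Nat.multinomial Finset.univ c : ℝ) * ∏ j, p j ^ c j
      ≤ (Real.exp (-θ) * (1 + p i * (Real.exp u - 1))) ^ n := by
  have hp1 : p i ≤ 1 := hs ▸ Finset.single_le_sum (fun j _ => hp j) (mem_univ i)
  have hw0 : ∀ c : Fin q → ℕ, 0 ≤ (Nat.multinomial Finset.univ c : ℝ) * ∏ j, p j ^ c j :=
    fun c => mul_nonneg (Nat.cast_nonneg _) (Finset.prod_nonneg fun j _ => pow_nonneg (hp j) _)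
  set w' : Fin q → ℝ := fun j => p j * (if j = i then Real.exp u else 1) with hw'
  have key : ∀ c : Fin q → ℕ,
      (Nat.multinomial Finset.univ c : ℝ) * (∏ j, p j ^ c j) * Real.exp (u * c i)
        = (Nat.multinomial Finset.univ c : ℝ) * ∏ j, w' j ^ c j := by
    intro c
    have h1 : ∏ j, w' j ^ c j
        = (∏ j, p j ^ c j) * ∏ j, (if j = i then Real.exp u else 1) ^ c j := by
      rw [← Finset.prod_mul_distrib]; exact Finset.prod_congr rfl fun j _ => (mul_pow _ _ _)
    have h2 : ∏ j, (if j = i then Real.exp u else 1) ^ c j = Real.exp u ^ c i := by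
      have : ∀ j, (if j = i then Real.exp u else 1) ^ c j
          = (if j = i then Real.exp u ^ c j else 1) := by
        intro j; split <;> simp
      rw [Finset.prod_congr rfl fun j _ => this j, Finset.prod_ite_eq' univ i
        (fun j => Real.exp u ^ c j), if_pos (mem_univ i)]
    rw [h1, h2, ← Real.exp_nat_mul]
    ring_nf
  calc ∑ c ∈ (Finset.Nat.antidiagonalTuple q n).filter P,
        (Nat.multinomial Finset.univ c : ℝ) * ∏ j, p j ^ c j
      ≤ ∑ c ∈ (Finset.Nat.antidiagonalTuple q n).filter P,
        ((Nat.multinomial Finset.univ c : ℝ) * ∏ j, p j ^ c j) * Real.exp (u * c i - θ * n) := by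
        refine Finset.sum_le_sum fun c hc => ?_
        refine le_mul_of_one_le_right (hw0 c) (Real.one_le_exp ?_)
        have := hP c (Finset.mem_filter.1 hc).2
        linarith
    _ ≤ ∑ c ∈ Finset.Nat.antidiagonalTuple q n,
        ((Nat.multinomial Finset.univ c : ℝ) * ∏ j, p j ^ c j) * Real.exp (u * c i - θ * n) := by
        refine Finset.sum_le_sum_of_subset_of_nonneg (Finset.filter_subset _ _) fun c _ _ =>
          mul_nonneg (hw0 c) (Real.exp_pos _).le
    _ = Real.exp (-θ * n) * ∑ c ∈ Finset.Nat.antidiagonalTuple q n,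
        (Nat.multinomial Finset.univ c : ℝ) * ∏ j, w' j ^ c j := by
        rw [Finset.mul_sum]
        refine Finset.sum_congr rfl fun c _ => ?_
        have he : u * c i - θ * n = u * c i + -θ * n := by ring
        rw [he, Real.exp_add, ← mul_assoc, key c, mul_comm]
    _ = Real.exp (-θ * n) * (∑ j, w' j) ^ n := by rw [multinomial_sum_pow]
    _ = (Real.exp (-θ) * (1 + p i * (Real.exp u - 1))) ^ n := by
        have hsum : ∑ j, w' j = 1 + p i * (Real.exp u - 1) := by
          have : ∀ j, w' j = p j + (if j = i then p i * (Real.exp u - 1) else 0) := by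
            intro j
            by_cases h : j = i
            · subst h; simp [hw']; ring
            · simp [hw', h]
          rw [Finset.sum_congr rfl fun j _ => this j, Finset.sum_add_distrib, hs,
            Finset.sum_ite_eq' univ i, if_pos (mem_univ i)]
        rw [hsum, mul_pow, ← Real.exp_nat_mul]
        ring_nf


lemma exp_le_quadratic {x : ℝ} (h : |x| ≤ 1) : Real.exp x ≤ 1 + x + x^2 := by
  have := Real.exp_bound h (n := 2) (by norm_num)
  simp [Finset.sum_range_succ] at this
  have h2 := (abs_le.1 this).2
  nlinarith [sq_nonneg x]

lemma chernoff_tails {q : ℕ} (p : Fin q → ℝ) (hp : ∀ j, 0 ≤ p j)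
    (hs : ∑ j, p j = 1) (δ : ℝ) (hδ : 0 < δ) :
    ∃ ρ : ℝ, 0 ≤ ρ ∧ ρ < 1 ∧ ∀ (i : Fin q) (n : ℕ),
      (∑ c ∈ (Finset.Nat.antidiagonalTuple q n).filter (fun c => (p i + δ) * n ≤ (c i : ℝ)),
          (Nat.multinomial Finset.univ c : ℝ) * ∏ j, p j ^ c j ≤ ρ ^ n) ∧
      (∑ c ∈ (Finset.Nat.antidiagonalTuple q n).filter (fun c => (c i : ℝ) ≤ (p i - δ) * n),
          (Nat.multinomial Finset.univ c : ℝ) * ∏ j, p j ^ c j ≤ ρ ^ n) := by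
  set t : ℝ := min 1 (δ / 2) with ht_def
  have ht0 : 0 < t := lt_min one_pos (by linarith)
  have ht1 : t ≤ 1 := min_le_left _ _
  have htδ : t ≤ δ / 2 := min_le_right _ _
  refine ⟨Real.exp (-(t * δ) / 2), (Real.exp_pos _).le, ?_, fun i n => ?_⟩
  · rw [Real.exp_lt_one_iff]; nlinarith
  have hp1 : p i ≤ 1 := hs ▸ Finset.single_le_sum (fun j _ => hp j) (mem_univ i)
  have hpi := hp i
  have habs : |t| ≤ 1 := by rw [abs_of_pos ht0]; exact ht1
  have habs' : |(-t)| ≤ 1 := by rw [abs_neg]; exact habs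
  have hquad := exp_le_quadratic habs
  have hquad' := exp_le_quadratic habs'
  have hptδ : p i * t ≤ δ / 2 := by nlinarith
  constructor
  · refine le_trans (chernoff_master p hp hs i t (t * (p i + δ)) n _
      (fun c hc => by nlinarith)) ?_
    refine pow_le_pow_left₀ (mul_nonneg (Real.exp_pos _).le ?_) ?_ n
    · nlinarith [Real.one_le_exp ht0.le]
    · calc Real.exp (-(t * (p i + δ))) * (1 + p i * (Real.exp t - 1))
          ≤ Real.exp (-(t * (p i + δ))) * Real.exp (p i * (t + t ^ 2)) := by
            refine mul_le_mul_of_nonneg_left ?_ (Real.exp_pos _).le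
            refine le_trans ?_ (Real.add_one_le_exp _)
            nlinarith [Real.one_le_exp ht0.le]
        _ ≤ Real.exp (-(t * δ) / 2) := by
            rw [← Real.exp_add, Real.exp_le_exp]
            nlinarith
  · refine le_trans (chernoff_master p hp hs i (-t) (t * (δ - p i)) n _
      (fun c hc => by nlinarith)) ?_
    refine pow_le_pow_left₀ (mul_nonneg (Real.exp_pos _).le ?_) ?_ n
    · nlinarith [(Real.exp_pos (-t)).le]
    · calc Real.exp (-(t * (δ - p i))) * (1 + p i * (Real.exp (-t) - 1))
          ≤ Real.exp (-(t * (δ - p i))) * Real.exp (p i * (-t + t ^ 2)) := by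
            refine mul_le_mul_of_nonneg_left ?_ (Real.exp_pos _).le
            refine le_trans ?_ (Real.add_one_le_exp _)
            nlinarith
        _ ≤ Real.exp (-(t * δ) / 2) := by
            rw [← Real.exp_add, Real.exp_le_exp]
            nlinarith


lemma ite_nonneg' {b : Prop} [Decidable b] {y : ℝ} (hy : 0 ≤ y) : 0 ≤ if b then y else 0 := by
  split
  · exact hy
  · exact le_rfl

lemma rpow_sum_eq {x : ℝ} (hx : 0 < x) {q : ℕ} (r : Fin q → ℝ) :
    x ^ (∑ i, r i) = ∏ i, x ^ r i := by
  simp only [Real.rpow_def_of_pos hx, Finset.mul_sum, Real.exp_sum]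

set_option maxHeartbeats 2000000 in
lemma ratio_tendsto {q : ℕ} (hq : 0 < q) (r p : Fin q → ℝ) (hp : ∀ i, 0 < p i)
    (hs : ∑ j, p j = 1) :
    Tendsto (fun n : ℕ =>
        ∑ c ∈ (Finset.Nat.antidiagonalTuple q n).filter fun c => ∀ i, 1 ≤ c i,
          (Nat.multinomial Finset.univ c : ℝ) * (∏ j, p j ^ c j) *
            ∏ i, (((c i : ℝ) / n) / p i) ^ r i)
      atTop (nhds 1) := by
  haveI : Nonempty (Fin q) := Fin.pos_iff_nonempty.1 hq
  -- uniform lower bound on p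
  obtain ⟨i0, -, hi0⟩ := Finset.exists_min_image univ p ⟨Classical.arbitrary _, mem_univ _⟩
  set m : ℝ := p i0 with hm
  have hm0 : 0 < m := hp i0
  have hmle : ∀ i, m ≤ p i := fun i => hi0 i (mem_univ i)
  -- the function F
  set F : (Fin q → ℝ) → ℝ := fun x => ∏ i, (x i / p i) ^ r i with hF
  have hFp : F p = 1 := by
    simp only [hF]
    rw [Finset.prod_eq_one]
    intro i _
    rw [div_self (hp i).ne', Real.one_rpow]
  have hFc : ContinuousAt F p := by
    apply tendsto_finset_prod
    intro i _
    exact (((continuous_apply i).continuousAt).div_const _).rpow_const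
      (Or.inl (by rw [div_self (hp i).ne']; norm_num))
  -- constants
  set Rabs : ℝ := ∑ i, |r i| with hRabs
  set B : ℝ := ∏ i, (p i ^ (-|r i|) + 1) with hB
  have hB0 : 0 < B := Finset.prod_pos fun i _ => by
    have := Real.rpow_pos_of_pos (hp i) (-|r i|); linarith
  rw [Metric.tendsto_atTop]
  intro ε hε
  -- continuity δ₀
  obtain ⟨δ0, hδ00, hδ0⟩ := Metric.continuousAt_iff.1 hFc (ε / 2) (by linarith)
  set δ : ℝ := min δ0 (m / 2) with hδdef
  have hδpos : 0 < δ := lt_min hδ00 (by linarith)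
  have hδm : δ ≤ m / 2 := min_le_right _ _
  have hδδ0 : δ ≤ δ0 := min_le_left _ _
  obtain ⟨ρ, hρ0, hρ1, hρ⟩ := chernoff_tails p (fun j => (hp j).le) hs δ hδpos
  -- tail bound function
  set T : ℕ → ℝ := fun n => (B * (n : ℝ) ^ Rabs + 1) * (2 * q * ρ ^ n) with hT
  have hTlim : Tendsto T atTop (nhds 0) := by
    have h1 : Tendsto (fun n : ℕ => (n : ℝ) ^ Rabs * ρ ^ n) atTop (nhds 0) := by
      rcases eq_or_lt_of_le hρ0 with h | h
      · refine Tendsto.congr' ?_ tendsto_const_nhds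
        filter_upwards [eventually_ge_atTop 1] with n hn
        rw [← h, zero_pow (by omega), mul_zero]
      · have hlog : Real.log ρ < 0 := Real.log_neg h hρ1
        have := (tendsto_rpow_mul_exp_neg_mul_atTop_nhds_zero Rabs (-Real.log ρ)
          (by linarith)).comp tendsto_natCast_atTop_atTop (α := ℕ)
        refine this.congr fun n => ?_
        simp only [Function.comp_apply]
        congr 1
        rw [neg_neg, mul_comm, Real.exp_nat_mul, Real.exp_log h]
    have h2 : Tendsto (fun n : ℕ => ρ ^ n) atTop (nhds 0) :=
      tendsto_pow_atTop_nhds_zero_of_lt_one hρ0 hρ1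
    have : Tendsto (fun n : ℕ => 2 * q * B * ((n:ℝ) ^ Rabs * ρ ^ n) + 2 * q * ρ ^ n)
        atTop (nhds (2 * q * B * 0 + 2 * q * 0)) :=
      ((h1.const_mul _).add (h2.const_mul _))
    rw [mul_zero, mul_zero, add_zero] at this
    exact this.congr fun n => by simp only [hT]; ring
  obtain ⟨N0, hN0⟩ := (eventually_atTop).1 (hTlim.eventually_lt_const (show (0:ℝ) < ε/2 by linarith))
  refine ⟨max N0 1, fun n hn => ?_⟩
  have hn1 : 1 ≤ n := le_trans (le_max_right _ _) hn
  have hnN0 : N0 ≤ n := le_trans (le_max_left _ _) hn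
  have hn0 : (0 : ℝ) < n := by exact_mod_cast hn1
  -- abbreviations
  set A := Finset.Nat.antidiagonalTuple q n with hA
  set w : (Fin q → ℕ) → ℝ := fun c => (Nat.multinomial Finset.univ c : ℝ) * ∏ j, p j ^ c j with hw
  have hw0 : ∀ c, 0 ≤ w c := fun c => mul_nonneg (Nat.cast_nonneg _)
    (Finset.prod_nonneg fun j _ => pow_nonneg (hp j).le _)
  have htotal : ∑ c ∈ A, w c = 1 := by
    rw [hA, hw]
    simp only
    rw [multinomial_sum_pow p n, hs, one_pow]
  classical
  set Good : (Fin q → ℕ) → Prop := fun c => ∀ i, |(c i : ℝ) / n - p i| < δ with hGood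
  set Pos : (Fin q → ℕ) → Prop := fun c => ∀ i, 1 ≤ c i with hPos
  have hp1 : ∀ i, p i ≤ 1 := fun i =>
    hs ▸ Finset.single_le_sum (fun j _ => (hp j).le) (mem_univ i)
  have hGoodPos : ∀ c, Good c → Pos c := by
    intro c hc i
    have h1 := abs_lt.1 (hc i)
    have h3 : (0:ℝ) < p i - δ := by have := hmle i; linarith
    have h4 : (0:ℝ) < (c i : ℝ) / n := by linarith [h1.1]
    have h5 : (0:ℝ) < (c i : ℝ) := by
      rcases Nat.eq_zero_or_pos (c i) with h | h
      · rw [h] at h4; norm_num at h4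
      · exact_mod_cast h
    exact_mod_cast Nat.one_le_iff_ne_zero.2 (by exact_mod_cast h5.ne')
  have hsplit_filter : (A.filter Pos).filter (fun c => ¬ Good c) ⊆ A.filter (fun c => ¬ Good c) := by
    intro c hc
    simp only [Finset.mem_filter] at hc ⊢
    exact ⟨hc.1.1, hc.2⟩
  have hfilter_eq : (A.filter Pos).filter (fun c => Good c) = A.filter (fun c => Good c) := by
    rw [Finset.filter_filter]
    refine Finset.filter_congr fun c _ => ?_
    exact ⟨fun h => h.2, fun h => ⟨hGoodPos c h, h⟩⟩
  -- X, Y, Z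
  set x : (Fin q → ℕ) → (Fin q → ℝ) := fun c i => (c i : ℝ) / n with hx
  set X : ℝ := ∑ c ∈ A.filter (fun c => Good c), w c * (F (x c) - 1) with hX
  set Y : ℝ := ∑ c ∈ (A.filter Pos).filter (fun c => ¬ Good c), w c * F (x c) with hY
  set Z : ℝ := ∑ c ∈ A.filter (fun c => ¬ Good c), w c with hZ
  have hF0 : ∀ c, 0 ≤ F (x c) := by
    intro c
    exact Finset.prod_nonneg fun i _ => Real.rpow_nonneg
      (div_nonneg (div_nonneg (Nat.cast_nonneg _) (Nat.cast_nonneg _)) (hp i).le) _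
  have hY0 : 0 ≤ Y := Finset.sum_nonneg fun c _ => mul_nonneg (hw0 c) (hF0 c)
  have hZ0 : 0 ≤ Z := Finset.sum_nonneg fun c _ => hw0 c
  -- decomposition
  have hRm1 : (∑ c ∈ A.filter Pos, w c * F (x c)) - 1 = X + Y - Z := by
    have e1 : ∑ c ∈ A.filter Pos, w c * F (x c)
        = (∑ c ∈ A.filter (fun c => Good c), w c * F (x c)) + Y := by
      rw [hY, ← hfilter_eq, Finset.sum_filter_add_sum_filter_not]
    have e2 : (1:ℝ) = (∑ c ∈ A.filter (fun c => Good c), w c) + Z := by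
      rw [hZ, ← htotal, Finset.sum_filter_add_sum_filter_not]
    have e3 : X = (∑ c ∈ A.filter (fun c => Good c), w c * F (x c))
        - ∑ c ∈ A.filter (fun c => Good c), w c := by
      rw [hX, ← Finset.sum_sub_distrib]
      exact Finset.sum_congr rfl fun c _ => by ring
    rw [e1]
    rw [e3]
    linarith [e2]
  -- bound on X
  have hXb : |X| ≤ ε / 2 := by
    have hgoodF : ∀ c ∈ A.filter (fun c => Good c), |F (x c) - 1| ≤ ε / 2 := by
      intro c hc
      have hGc : Good c := (Finset.mem_filter.1 hc).2
      have hdist : dist (x c) p < δ0 := by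
        rw [dist_pi_lt_iff hδ00]
        intro i
        rw [Real.dist_eq]
        exact lt_of_lt_of_le (hGc i) hδδ0
      have := hδ0 hdist
      rw [hFp, Real.dist_eq] at this
      exact this.le
    calc |X| ≤ ∑ c ∈ A.filter (fun c => Good c), |w c * (F (x c) - 1)| :=
          Finset.abs_sum_le_sum_abs _ _
      _ = ∑ c ∈ A.filter (fun c => Good c), w c * |F (x c) - 1| := by
          refine Finset.sum_congr rfl fun c _ => ?_
          rw [abs_mul, abs_of_nonneg (hw0 c)]
      _ ≤ ∑ c ∈ A.filter (fun c => Good c), w c * (ε / 2) :=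
          Finset.sum_le_sum fun c hc => mul_le_mul_of_nonneg_left (hgoodF c hc) (hw0 c)
      _ = (∑ c ∈ A.filter (fun c => Good c), w c) * (ε / 2) := by rw [← Finset.sum_mul]
      _ ≤ 1 * (ε / 2) := by
          refine mul_le_mul_of_nonneg_right ?_ (by linarith)
          rw [← htotal]
          exact Finset.sum_le_sum_of_subset_of_nonneg (Finset.filter_subset _ _)
            fun c _ _ => hw0 c
      _ = ε / 2 := one_mul _
  -- bound on F over positive tuples
  have hFb : ∀ c ∈ A.filter Pos, F (x c) ≤ B * (n : ℝ) ^ Rabs := by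
    intro c hc
    obtain ⟨hcA, hcP⟩ := Finset.mem_filter.1 hc
    have hsum_c : ∑ i, c i = n := Finset.Nat.mem_antidiagonalTuple.1 hcA
    have hcle : ∀ i, (c i : ℝ) ≤ n := by
      intro i
      have : c i ≤ n := hsum_c ▸ Finset.single_le_sum
        (f := fun i => c i) (fun _ _ => Nat.zero_le _) (mem_univ i)
      exact_mod_cast this
    have hc1 : ∀ i, (1:ℝ) ≤ c i := fun i => by exact_mod_cast hcP i
    have key : ∀ i, ((c i : ℝ) / n / p i) ^ r i ≤ (p i ^ (-|r i|) + 1) * (n : ℝ) ^ |r i| := by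
      intro i
      set xx : ℝ := (c i : ℝ) / n / p i with hxx
      have hx0 : 0 < xx := div_pos (div_pos (by linarith [hc1 i]) hn0) (hp i)
      have hxup : xx ≤ 1 / p i := by
        rw [hxx]
        gcongr
        · exact (hp i).le
        · rw [div_le_one hn0]; exact hcle i
      have hxinv : xx⁻¹ ≤ n := by
        have h1n : (1:ℝ)/n ≤ xx := by
          rw [hxx]
          have hc0 : (0:ℝ) ≤ (c i : ℝ) / n := div_nonneg (Nat.cast_nonneg _) hn0.le
          have h2 : (1:ℝ)/n ≤ (c i:ℝ)/n := by gcongr; exact hc1 i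
          have h3 : (c i:ℝ)/n ≤ (c i:ℝ)/n / p i := by
            rw [le_div_iff₀ (hp i)]
            nlinarith [hp1 i, hp i]
          linarith
        have h4 := inv_anti₀ (by positivity : (0:ℝ) < 1/n) h1n
        rwa [one_div, inv_inv] at h4
      have hn_pow : (1:ℝ) ≤ (n : ℝ) ^ |r i| := by
        have h1 : ((1:ℝ)) ^ |r i| ≤ (n : ℝ) ^ |r i| :=
          Real.rpow_le_rpow zero_le_one (by exact_mod_cast hn1) (abs_nonneg _)
        rwa [Real.one_rpow] at h1
      have hpneg : 0 < p i ^ (-|r i|) := Real.rpow_pos_of_pos (hp i) _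
      rcases le_or_gt 1 xx with hx1 | hx1
      · have e1 : xx ^ r i ≤ xx ^ |r i| :=
          Real.rpow_le_rpow_of_exponent_le hx1 (le_abs_self _)
        have e2 : xx ^ |r i| ≤ (1 / p i) ^ |r i| :=
          Real.rpow_le_rpow hx0.le hxup (abs_nonneg _)
        have e3 : (1 / p i) ^ |r i| = p i ^ (-|r i|) := by
          rw [one_div, Real.inv_rpow (hp i).le, ← Real.rpow_neg (hp i).le]
        nlinarith [hn_pow, hpneg, e1, e2, e3.le, e3.ge]
      · have e1 : xx ^ r i ≤ xx ^ (-|r i|) :=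
          Real.rpow_le_rpow_of_exponent_ge hx0 hx1.le (neg_abs_le _)
        have e2 : xx ^ (-|r i|) = (xx⁻¹) ^ |r i| := by
          rw [Real.rpow_neg hx0.le, ← Real.inv_rpow hx0.le]
        have e3 : (xx⁻¹) ^ |r i| ≤ (n:ℝ) ^ |r i| :=
          Real.rpow_le_rpow (inv_nonneg.2 hx0.le) hxinv (abs_nonneg _)
        nlinarith [Real.rpow_nonneg (Nat.cast_nonneg (α := ℝ) n) (|r i|)]
    calc F (x c) = ∏ i, ((c i : ℝ) / n / p i) ^ r i := by simp only [hF, hx]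
      _ ≤ ∏ i, ((p i ^ (-|r i|) + 1) * (n : ℝ) ^ |r i|) := by
          refine Finset.prod_le_prod (fun i _ => ?_) (fun i _ => key i)
          exact Real.rpow_nonneg (div_nonneg (div_nonneg (Nat.cast_nonneg _)
            (Nat.cast_nonneg _)) (hp i).le) _
      _ = B * (n : ℝ) ^ Rabs := by
          rw [Finset.prod_mul_distrib, ← rpow_sum_eq hn0, hB, hRabs]
  -- bound on Y
  have hYb : Y ≤ B * (n : ℝ) ^ Rabs * Z := by
    calc Y ≤ ∑ c ∈ (A.filter Pos).filter (fun c => ¬ Good c), w c * (B * (n : ℝ) ^ Rabs) := by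
          refine Finset.sum_le_sum fun c hc => ?_
          exact mul_le_mul_of_nonneg_left (hFb c (Finset.mem_of_mem_filter c hc)) (hw0 c)
      _ = (∑ c ∈ (A.filter Pos).filter (fun c => ¬ Good c), w c) * (B * (n : ℝ) ^ Rabs) := by
          rw [← Finset.sum_mul]
      _ ≤ Z * (B * (n : ℝ) ^ Rabs) := by
          refine mul_le_mul_of_nonneg_right ?_ (by positivity)
          exact Finset.sum_le_sum_of_subset_of_nonneg hsplit_filter fun c _ _ => hw0 c
      _ = B * (n : ℝ) ^ Rabs * Z := by ring
  -- Chernoff bound on Z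
  have hZb : Z ≤ 2 * q * ρ ^ n := by
    have e0 : Z = ∑ c ∈ A, if ¬ Good c then w c else 0 := by
      rw [hZ, Finset.sum_filter]
    have pointwise : ∀ c ∈ A, (if ¬ Good c then w c else 0)
        ≤ ∑ i, ((if (p i + δ) * n ≤ (c i : ℝ) then w c else 0)
              + (if (c i : ℝ) ≤ (p i - δ) * n then w c else 0)) := by
      intro c _
      by_cases hGc : Good c
      · rw [if_neg (not_not_intro hGc)]
        exact Finset.sum_nonneg fun i _ => add_nonneg (ite_nonneg' (hw0 c)) (ite_nonneg' (hw0 c))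
      · rw [if_pos hGc]
        have : ∃ i, δ ≤ |(c i : ℝ) / n - p i| := by
          by_contra hcon
          push_neg at hcon
          exact hGc fun i => hcon i
        obtain ⟨i, hi⟩ := this
        have hstep : w c ≤ (if (p i + δ) * n ≤ (c i : ℝ) then w c else 0)
              + (if (c i : ℝ) ≤ (p i - δ) * n then w c else 0) := by
          rcases le_abs.1 hi with h | h
          · rw [if_pos (by rw [← le_div_iff₀ hn0]; linarith)]
            exact le_add_of_nonneg_right (ite_nonneg' (hw0 c))
          · rw [if_pos (show (c i : ℝ) ≤ (p i - δ) * n by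
              rw [← div_le_iff₀ hn0]; linarith)]
            exact le_add_of_nonneg_left (ite_nonneg' (hw0 c))
        exact le_trans hstep (Finset.single_le_sum
          (f := fun j => (if (p j + δ) * n ≤ (c j : ℝ) then w c else 0)
              + (if (c j : ℝ) ≤ (p j - δ) * n then w c else 0))
          (fun j _ => add_nonneg (ite_nonneg' (hw0 c)) (ite_nonneg' (hw0 c))) (mem_univ i))
    calc Z ≤ ∑ c ∈ A, ∑ i, ((if (p i + δ) * n ≤ (c i : ℝ) then w c else 0)
              + (if (c i : ℝ) ≤ (p i - δ) * n then w c else 0)) := by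
          rw [e0]; exact Finset.sum_le_sum pointwise
      _ = ∑ i, ∑ c ∈ A, ((if (p i + δ) * n ≤ (c i : ℝ) then w c else 0)
              + (if (c i : ℝ) ≤ (p i - δ) * n then w c else 0)) := Finset.sum_comm
      _ = ∑ i : Fin q, ((∑ c ∈ A.filter (fun c => (p i + δ) * n ≤ (c i : ℝ)), w c)
              + ∑ c ∈ A.filter (fun c => (c i : ℝ) ≤ (p i - δ) * n), w c) := by
          refine Finset.sum_congr rfl fun i _ => ?_
          rw [Finset.sum_add_distrib, Finset.sum_filter, Finset.sum_filter]
      _ ≤ ∑ i : Fin q, (ρ ^ n + ρ ^ n) := by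
          refine Finset.sum_le_sum fun i _ => ?_
          exact add_le_add (hρ i n).1 (hρ i n).2
      _ = 2 * q * ρ ^ n := by
          rw [Finset.sum_const, Finset.card_univ, Fintype.card_fin, nsmul_eq_mul]
          ring
  -- conclusion
  have hTn : T n < ε / 2 := hN0 n hnN0
  have hgoal : ∀ c, (Nat.multinomial Finset.univ c : ℝ) * (∏ j, p j ^ c j) *
      ∏ i, (((c i : ℝ) / n) / p i) ^ r i = w c * F (x c) := by
    intro c
    simp only [hw, hF, hx]
  rw [Real.dist_eq]
  have hsum_eq : (∑ c ∈ A.filter Pos,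
      (Nat.multinomial Finset.univ c : ℝ) * (∏ j, p j ^ c j) *
        ∏ i, (((c i : ℝ) / n) / p i) ^ r i) = X + Y - Z + 1 := by
    calc (∑ c ∈ A.filter Pos,
        (Nat.multinomial Finset.univ c : ℝ) * (∏ j, p j ^ c j) *
          ∏ i, (((c i : ℝ) / n) / p i) ^ r i)
        = ∑ c ∈ A.filter Pos, w c * F (x c) := Finset.sum_congr rfl fun c _ => hgoal c
      _ = X + Y - Z + 1 := by linarith [hRm1]
  calc |(∑ c ∈ A.filter Pos,
        (Nat.multinomial Finset.univ c : ℝ) * (∏ j, p j ^ c j) *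
          ∏ i, (((c i : ℝ) / n) / p i) ^ r i) - 1|
      = |X + Y - Z| := by rw [hsum_eq]; congr 1; ring
    _ ≤ |X| + (Y + Z) := by
        have h1 : |X + Y - Z| ≤ |X| + |Y - Z| := by
          have := abs_add_le X (Y - Z)
          calc |X + Y - Z| = |X + (Y - Z)| := by ring_nf
            _ ≤ |X| + |Y - Z| := abs_add_le _ _
        have h2 : |Y - Z| ≤ Y + Z :=
          abs_sub_le_iff.2 ⟨by linarith, by linarith⟩
        linarith
    _ ≤ ε / 2 + ((B * (n:ℝ) ^ Rabs + 1) * (2 * q * ρ ^ n)) := by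
        have h3 : Y + Z ≤ (B * (n:ℝ) ^ Rabs + 1) * Z := by nlinarith
        have h4 : (B * (n:ℝ) ^ Rabs + 1) * Z ≤ (B * (n:ℝ) ^ Rabs + 1) * (2 * q * ρ ^ n) := by
          refine mul_le_mul_of_nonneg_left hZb ?_
          positivity
        linarith
    _ = ε / 2 + T n := by rw [hT]
    _ < ε := by linarith

/-- **Regev–Beckner.** For reals `r_1,…,r_q` and positive reals
`k_1,…,k_q`, with `k = k_1 + ⋯ + k_q` and `r = r_1 + ⋯ + r_q`,
`Σ_{n_1+⋯+n_q=n} (n choose n_1,…,n_q) k_1^{n_1} ⋯ k_q^{n_q} n_1^{r_1} ⋯ n_q^{r_q}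
  ∼ ((k_1/k)^{r_1} ⋯ (k_q/k)^{r_q}) n^r k^n`
(as usual, the sum is restricted to tuples of positive integers). -/
theorem statement13 {q : ℕ} (hq : 0 < q) (r k : Fin q → ℝ) (hk : ∀ i, 0 < k i) :
    Filter.Tendsto
      (fun n : ℕ =>
        (∑ c ∈ (Finset.Nat.antidiagonalTuple q n).filter fun c => ∀ i, 1 ≤ c i,
            (Nat.multinomial Finset.univ c : ℝ) *
              ∏ i, (k i ^ c i * (c i : ℝ) ^ r i)) /
          ((∏ i, (k i / ∑ j, k j) ^ r i) *
            (n : ℝ) ^ (∑ i, r i) * (∑ j, k j) ^ n))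
      Filter.atTop (nhds 1) := by
  haveI : Nonempty (Fin q) := Fin.pos_iff_nonempty.1 hq
  have hK : 0 < ∑ j, k j := Finset.sum_pos (fun j _ => hk j) Finset.univ_nonempty
  set K : ℝ := ∑ j, k j with hKdef
  set p : Fin q → ℝ := fun i => k i / K with hpdef
  have hp : ∀ i, 0 < p i := fun i => div_pos (hk i) hK
  have hs : ∑ j, p j = 1 := by
    simp only [hpdef]
    rw [← Finset.sum_div, ← hKdef, div_self hK.ne']
  refine Filter.Tendsto.congr' ?_ (ratio_tendsto hq r p hp hs)
  filter_upwards [eventually_ge_atTop 1] with n hn1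
  have hn0 : (0 : ℝ) < n := by exact_mod_cast hn1
  set D : ℝ := (∏ i, p i ^ r i) * (n : ℝ) ^ (∑ i, r i) * K ^ n with hD
  have hD0 : 0 < D := by
    refine mul_pos (mul_pos (Finset.prod_pos fun i _ => Real.rpow_pos_of_pos (hp i) _)
      (Real.rpow_pos_of_pos hn0 _)) (pow_pos hK _)
  have key : ∀ c ∈ (Finset.Nat.antidiagonalTuple q n).filter fun c => ∀ i, 1 ≤ c i,
      (Nat.multinomial Finset.univ c : ℝ) * ∏ i, (k i ^ c i * (c i : ℝ) ^ r i)
        = D * ((Nat.multinomial Finset.univ c : ℝ) * (∏ j, p j ^ c j) *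
            ∏ i, (((c i : ℝ) / n) / p i) ^ r i) := by
    intro c hc
    obtain ⟨hcA, hcP⟩ := Finset.mem_filter.1 hc
    have hsum_c : ∑ i, c i = n := Finset.Nat.mem_antidiagonalTuple.1 hcA
    have keyi : ∀ i : Fin q, k i ^ c i * (c i : ℝ) ^ r i
        = (p i ^ c i * K ^ c i) * ((((c i : ℝ) / n) / p i) ^ r i * p i ^ r i * (n:ℝ) ^ r i) := by
      intro i
      have hk_eq : k i = p i * K := by
        simp only [hpdef]
        rw [div_mul_cancel₀ _ hK.ne']
      have h2 : (((c i : ℝ) / n) / p i) ^ r i * p i ^ r i * (n:ℝ) ^ r i = (c i : ℝ) ^ r i := by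
        rw [Real.div_rpow (div_nonneg (Nat.cast_nonneg _) hn0.le) (hp i).le,
            Real.div_rpow (Nat.cast_nonneg _) hn0.le]
        field_simp [(Real.rpow_pos_of_pos (hp i) (r i)).ne',
          (Real.rpow_pos_of_pos hn0 (r i)).ne']
      rw [hk_eq, mul_pow, ← h2]
    have e : ∏ i, (k i ^ c i * (c i : ℝ) ^ r i)
        = (∏ i, p i ^ c i) * K ^ n *
          ((∏ i, (((c i : ℝ) / n) / p i) ^ r i) * (∏ i, p i ^ r i) * (n:ℝ) ^ (∑ i, r i)) := by
      calc ∏ i, (k i ^ c i * (c i : ℝ) ^ r i)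
          = ∏ i, ((p i ^ c i * K ^ c i) *
              ((((c i : ℝ) / n) / p i) ^ r i * p i ^ r i * (n:ℝ) ^ r i)) :=
            Finset.prod_congr rfl fun i _ => keyi i
        _ = (∏ i, p i ^ c i) * (∏ i, K ^ c i) *
            ((∏ i, (((c i : ℝ) / n) / p i) ^ r i) * (∏ i, p i ^ r i) * (∏ i, (n:ℝ) ^ r i)) := by
            simp only [Finset.prod_mul_distrib]
        _ = _ := by
            rw [Finset.prod_pow_eq_pow_sum, hsum_c, ← rpow_sum_eq hn0]
    rw [e, hD]
    ring
  rw [Finset.sum_congr rfl key, ← Finset.mul_sum]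
  rw [mul_div_cancel_left₀ _ hD0.ne']
end
end

section
/- Let F be a field of characteristic 0, W an F-algebra, and R a nonzero commutative F-algebra that is an integral domain. Then for every n, c_n(W) = c_n(W ⊗_F R); in particular the codimension sequence is unchanged under extension of scalars, so for its computation one may assume F is algebraically closed. -/
open scoped TensorProduct


noncomputable section

namespace PIDim

variable (F : Type) [Field F]

section Aux

variable {A : Type} [Ring A] [Algebra F A]

lemma eval_mono {n : ℕ} (σ : Equiv.Perm (Fin n)) (v : ℕ → A) :
    FreeAlgebra.lift F v
        ((List.ofFn fun i : Fin n => FreeAlgebra.ι F ((σ i : Fin n) : ℕ)).prod)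
      = (List.ofFn fun i : Fin n => v ((σ i : Fin n) : ℕ)).prod := by
  rw [map_list_prod, List.map_ofFn]
  simp [Function.comp_def, FreeAlgebra.lift_ι_apply]

lemma mem_IdSet_iff {W : Type} [Ring W] [Algebra F W] {p : FreeAlgebra F ℕ} :
    p ∈ IdSet F W ↔ ∀ φ : FreeAlgebra F ℕ →ₐ[F] W, φ p = 0 := Iff.rfl

/-- Evaluation of an element of `Pn` only depends on the first `n` variables. -/
lemma eval_eq_of_agree {n : ℕ} {p : FreeAlgebra F ℕ} (hp : p ∈ Pn F n)
    {v v' : ℕ → A} (h : ∀ i < n, v i = v' i) :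
    FreeAlgebra.lift F v p = FreeAlgebra.lift F v' p := by
  induction hp using Submodule.span_induction with
  | mem x hx =>
      obtain ⟨σ, rfl⟩ := hx
      rw [eval_mono, eval_mono]
      congr 1
      exact congrArg List.ofFn (funext fun i => h _ (σ i).isLt)
  | zero => simp
  | add x y _ _ hx hy => simp [map_add, hx, hy]
  | smul a x _ hx => simp [map_smul, hx]

/-- Multilinearity: evaluation of an element of `Pn` is linear in each of the
first `n` variables. -/
lemma eval_update_exists {n k : ℕ} (hk : k < n) {p : FreeAlgebra F ℕ}
    (hp : p ∈ Pn F n) (v : ℕ → A) :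
    ∃ g : A →ₗ[F] A, ∀ t : A,
      FreeAlgebra.lift F (Function.update v k t) p = g t := by
  induction hp using Submodule.span_induction with
  | mem x hx =>
      obtain ⟨σ, rfl⟩ := hx
      set i₀ : Fin n := σ⁻¹ ⟨k, hk⟩ with hi₀
      have hσ : ∀ i : Fin n, (((σ i : Fin n) : ℕ) = k) ↔ i = i₀ := by
        intro i
        constructor
        · intro h
          have h2 : σ i = ⟨k, hk⟩ := Fin.ext h
          rw [hi₀, ← h2]; simp
        · intro h
          rw [hi₀] at h; subst h; simp
      set L : List A := List.ofFn fun i : Fin n => v ((σ i : Fin n) : ℕ) with hL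
      have hlen : L.length = n := by simp [hL]
      have hset : ∀ t : A,
          (List.ofFn fun i : Fin n => Function.update v k t ((σ i : Fin n) : ℕ))
            = L.set i₀ t := by
        intro t
        apply List.ext_getElem (by simp [hL])
        intro j hj hj'
        have hj'' : j < n := by simpa [hL] using hj'
        rw [List.getElem_ofFn, List.getElem_set]
        simp only [hL, List.getElem_ofFn]
        rw [Function.update_apply]
        have : (((σ ⟨j, hj''⟩ : Fin n) : ℕ) = k) ↔ ((i₀ : ℕ) = j) := by
          rw [hσ ⟨j, hj''⟩]
          constructor
          · intro h; exact (congrArg Fin.val h).symm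
          · intro h; exact Fin.ext h.symm
        by_cases hcase : ((σ ⟨j, hj''⟩ : Fin n) : ℕ) = k
        · rw [if_pos hcase, if_pos (this.mp hcase)]
        · rw [if_neg hcase, if_neg (fun hc => hcase (this.mpr hc))]
      refine ⟨(LinearMap.mulRight F ((L.drop (i₀ + 1)).prod)).comp
        (LinearMap.mulLeft F ((L.take (i₀ : ℕ)).prod)), ?_⟩
      intro t
      rw [eval_mono, hset t, List.prod_set]
      have : ((i₀ : ℕ) < L.length) := by rw [hlen]; exact i₀.isLt
      rw [if_pos this]
      simp [LinearMap.mulRight, LinearMap.mulLeft, mul_assoc]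
  | zero => exact ⟨0, by simp⟩
  | add x y _ _ hx hy =>
      obtain ⟨g₁, h₁⟩ := hx; obtain ⟨g₂, h₂⟩ := hy
      exact ⟨g₁ + g₂, fun t => by simp [map_add, h₁ t, h₂ t]⟩
  | smul a x _ hx =>
      obtain ⟨g, h⟩ := hx
      exact ⟨a • g, fun t => by simp [map_smul, h t]⟩

variable {W : Type} [Ring W] [Algebra F W] {R : Type} [CommRing R] [Algebra F R]

lemma prod_ofFn_tmul : ∀ {n : ℕ} (a : Fin n → W) (b : Fin n → R),
    (List.ofFn fun i => a i ⊗ₜ[F] b i).prod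
      = (List.ofFn a).prod ⊗ₜ[F] (∏ i, b i)
  | 0, a, b => by simp [Algebra.TensorProduct.one_def]
  | (m + 1), a, b => by
      rw [List.ofFn_succ, List.ofFn_succ, List.prod_cons, List.prod_cons,
        prod_ofFn_tmul (fun i => a i.succ) (fun i => b i.succ),
        Algebra.TensorProduct.tmul_mul_tmul, Fin.prod_univ_succ]

/-- Evaluation of an element of `Pn` at pure tensors. -/
lemma eval_tmul {n : ℕ} {p : FreeAlgebra F ℕ} (hp : p ∈ Pn F n)
    (w : ℕ → W) (r : ℕ → R) :
    FreeAlgebra.lift F (fun i => w i ⊗ₜ[F] r i) p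
      = (FreeAlgebra.lift F w p) ⊗ₜ[F] (∏ i : Fin n, r (i : ℕ)) := by
  induction hp using Submodule.span_induction with
  | mem x hx =>
      obtain ⟨σ, rfl⟩ := hx
      rw [eval_mono, eval_mono, prod_ofFn_tmul]
      congr 1
      exact Equiv.prod_comp σ fun i : Fin n => r (i : ℕ)
  | zero => simp
  | add x y _ _ hx hy => simp [map_add, hx, hy, TensorProduct.add_tmul]
  | smul a x _ hx => simp [map_smul, hx, TensorProduct.smul_tmul']

/-- A multilinear identity of `W` remains an identity of `W ⊗ R`. -/
lemma mem_IdSet_tensor {n : ℕ} {p : FreeAlgebra F ℕ} (hp : p ∈ Pn F n)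
    (hW : p ∈ IdSet F W) : p ∈ IdSet F (W ⊗[F] R) := by
  have hW' : ∀ w : ℕ → W, FreeAlgebra.lift F w p = 0 :=
    fun w => hW (FreeAlgebra.lift F w)
  have main : ∀ k (v : ℕ → W ⊗[F] R),
      (∀ i, k ≤ i → ∃ (w : W) (r : R), v i = w ⊗ₜ[F] r) →
      FreeAlgebra.lift F v p = 0 := by
    intro k
    induction k with
    | zero =>
        intro v hv
        choose w r hwr using fun i => hv i (Nat.zero_le i)
        have hv' : v = fun i => w i ⊗ₜ[F] r i := funext hwr
        rw [hv', eval_tmul F hp, hW', TensorProduct.zero_tmul]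
    | succ k ih =>
        intro v hv
        by_cases hk : k < n
        · obtain ⟨g, hg⟩ := eval_update_exists F hk hp v
          have hpure : ∀ (w : W) (r : R), g (w ⊗ₜ[F] r) = 0 := by
            intro w r
            rw [← hg]
            apply ih
            intro i hi
            rcases eq_or_ne i k with rfl | hne
            · exact ⟨w, r, by rw [Function.update_self]⟩
            · rw [Function.update_of_ne hne]
              exact hv i (Nat.lt_of_le_of_ne hi (Ne.symm hne))
          have hz' : ∀ t : W ⊗[F] R, t ∈ Submodule.span F
              {t : W ⊗[F] R | ∃ (a : W) (b : R), a ⊗ₜ[F] b = t} → g t = 0 := by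
            intro t ht
            induction ht using Submodule.span_induction with
            | mem x hx => obtain ⟨a, b, rfl⟩ := hx; exact hpure a b
            | zero => simp
            | add x y _ _ hx hy => simp [map_add, hx, hy]
            | smul a x _ hx => simp [map_smul, hx]
          have hz : g (v k) = 0 :=
            hz' _ (by rw [TensorProduct.span_tmul_eq_top]; trivial)
          have := hg (v k)
          rw [Function.update_eq_self] at this
          rw [this, hz]
        · have h0 : FreeAlgebra.lift F
              (Function.update v k ((0 : W) ⊗ₜ[F] (0 : R))) p = 0 := by
            apply ih
            intro i hi
            rcases eq_or_ne i k with rfl | hne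
            · exact ⟨0, 0, by rw [Function.update_self]⟩
            · rw [Function.update_of_ne hne]
              exact hv i (Nat.lt_of_le_of_ne hi (Ne.symm hne))
          rw [eval_eq_of_agree F hp
            (v' := Function.update v k ((0 : W) ⊗ₜ[F] (0 : R)))
            (fun i hi =>
              (Function.update_of_ne
                (fun hik => hk (by rw [← hik]; exact hi)) _ v).symm), h0]
  have final : ∀ v : ℕ → W ⊗[F] R, FreeAlgebra.lift F v p = 0 := by
    intro v
    set v' : ℕ → W ⊗[F] R :=
      fun i => if i < n then v i else (0 : W) ⊗ₜ[F] (0 : R) with hv'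
    rw [eval_eq_of_agree F hp
      (v' := v') (fun i hi => by simp [hv', hi])]
    exact main n v' fun i hi =>
      ⟨0, 0, by simp [hv', Nat.not_lt.mpr hi]⟩
  rw [mem_IdSet_iff]
  intro φ
  have hφ : φ = FreeAlgebra.lift F (φ ∘ FreeAlgebra.ι F) := by
    rw [← FreeAlgebra.lift_symm_apply, Equiv.apply_symm_apply]
  rw [hφ]
  exact final _

/-- Conversely, any identity of `W ⊗ R` is an identity of `W` (using `R ≠ 0`). -/
lemma mem_IdSet_of_tensor [Nontrivial R] {p : FreeAlgebra F ℕ}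
    (h : p ∈ IdSet F (W ⊗[F] R)) : p ∈ IdSet F W := by
  rw [mem_IdSet_iff]
  intro φ
  have h2 : (φ p) ⊗ₜ[F] (1 : R) = 0 := by
    have := h ((Algebra.TensorProduct.includeLeft :
      W →ₐ[F] W ⊗[F] R).comp φ)
    simpa using this
  have hinj : Function.Injective (fun w : W => w ⊗ₜ[F] (1 : R)) := by
    have h1 : Function.Injective
        (LinearMap.lTensor W (Algebra.linearMap F R)) :=
      Module.Flat.lTensor_preserves_injective_linearMap _
        (RingHom.injective (algebraMap F R))
    have h0 : Function.Injective (fun w : W => w ⊗ₜ[F] (1 : F)) := by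
      intro a b hab
      have := congrArg (TensorProduct.rid F W) hab
      simpa using this
    have hcomp : (fun w : W => w ⊗ₜ[F] (1 : R))
        = (LinearMap.lTensor W (Algebra.linearMap F R)) ∘
          (fun w : W => w ⊗ₜ[F] (1 : F)) := by
      funext w
      simp [LinearMap.lTensor_tmul]
    rw [hcomp]
    exact h1.comp h0
  have := hinj (a₂ := 0) (by simpa using h2)
  exact this

end Aux

/-- Codimensions are unchanged under extension of scalars by a nonzero
commutative integral domain: `c_n(W) = c_n(W ⊗_F R)` for all `n`. -/
theorem statement15 {F : Type} [Field F] [CharZero F]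
    (W : Type) [Ring W] [Algebra F W]
    (R : Type) [CommRing R] [IsDomain R] [Algebra F R] :
    ∀ n : ℕ, codim F W n = codim F (W ⊗[F] R) n := by
  intro n
  have h : Submodule.comap (Pn F n).subtype (IdSet F W)
      = Submodule.comap (Pn F n).subtype (IdSet F (W ⊗[F] R)) := by
    ext x
    simp only [Submodule.mem_comap, Submodule.subtype_apply]
    exact ⟨fun hx => mem_IdSet_tensor F x.2 hx,
      fun hx => mem_IdSet_of_tensor F hx⟩
  unfold codim
  rw [h]

end PIDim
end
end
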